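/- A singular minimal cylinder M^n in ℝ^{n+1} with respect to a fixed unit vector u (i.e. a generalized cylinder whose mean curvature satisfies nH = α·⟨ξ,u⟩/⟨σ,u⟩ with α ≠ 0) is either a hyperplane parallel to u, or its base curve γ satisfies the α-catenary equation κ(s) = α·⟨N(s),u⟩/⟨γ(s),u⟩ and u is orthogonal to all ruling directions w₁,…,w_{n−1}. -/

import Mathlib

open Set

/-- Theorem 3.1: A singular minimal generalized cylinder in
`ℝ^{n+1}`, i.e. `σ(s,t) = γ(s) + ∑ tᵢ wᵢ` with `w₁,…,w_{n−1}` orthonormal,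
`γ` a unit-speed curve in `Γ = span{w}^⊥` with Frenet frame `T, N` and
curvature `κ`, satisfying the singular minimal equation `nH = α⟨ξ,u⟩/⟨σ,u⟩`
(which, since `H = κ/n` and `ξ = N`, reads
`κ(s)·(∑ tᵢ⟨wᵢ,u⟩ + ⟨γ(s),u⟩) = α⟨N(s),u⟩` for all `s, t`), is either a
hyperplane parallel to `u` (`κ ≡ 0` and `⟨N,u⟩ ≡ 0`) or an `α`-catenary
cylinder whose rulings are orthogonal to `u` (`⟨wᵢ,u⟩ = 0` for all `i` and
`κ = α⟨N,u⟩/⟨γ,u⟩`). -/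
theorem stmt5 (n : ℕ) (hn : 2 ≤ n) (α : ℝ) (hα : α ≠ 0)
    (u : EuclideanSpace ℝ (Fin (n + 1))) (hu : ‖u‖ = 1)
    (w : Fin (n - 1) → EuclideanSpace ℝ (Fin (n + 1))) (hw : Orthonormal ℝ w)
    (γ T N : ℝ → EuclideanSpace ℝ (Fin (n + 1))) (κ : ℝ → ℝ)
    (hT : ∀ s, HasDerivAt γ (T s) s)
    (hTunit : ∀ s, ‖T s‖ = 1) (hNunit : ∀ s, ‖N s‖ = 1)
    (hTN : ∀ s, (inner ℝ (T s) (N s) : ℝ) = 0)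
    (hfrenet : ∀ s, HasDerivAt T (κ s • N s) s)
    (hplane : ∀ s, ∀ i, (inner ℝ (γ s) (w i) : ℝ) = 0 ∧
        (inner ℝ (T s) (w i) : ℝ) = 0 ∧ (inner ℝ (N s) (w i) : ℝ) = 0)
    (hpos : ∀ s, 0 < (inner ℝ (γ s) u : ℝ))
    (hSM : ∀ s, ∀ t : Fin (n - 1) → ℝ,
      κ s * ((∑ i, t i * (inner ℝ (w i) u : ℝ)) + (inner ℝ (γ s) u : ℝ))
        = α * (inner ℝ (N s) u : ℝ)) :
    (∀ s, κ s = 0 ∧ (inner ℝ (N s) u : ℝ) = 0) ∨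
      ((∀ i, (inner ℝ (w i) u : ℝ) = 0) ∧
        ∀ s, κ s = α * (inner ℝ (N s) u : ℝ) / (inner ℝ (γ s) u : ℝ)) := by
  by_cases hcase : ∀ i, (inner ℝ (w i) u : ℝ) = 0
  · right
    refine ⟨hcase, fun s => ?_⟩
    have h0 := hSM s 0
    simp only [Pi.zero_apply, zero_mul, Finset.sum_const_zero, zero_add] at h0
    have hne : (inner ℝ (γ s) u : ℝ) ≠ 0 := ne_of_gt (hpos s)
    rw [eq_div_iff hne]
    linarith [h0]
  · left
    push_neg at hcase
    obtain ⟨i, hi⟩ := hcase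
    intro s
    have h0 := hSM s 0
    simp only [Pi.zero_apply, zero_mul, Finset.sum_const_zero, zero_add] at h0
    have h1 := hSM s (Pi.single i 1)
    have hsum : (∑ j, (Pi.single i (1:ℝ) : Fin (n-1) → ℝ) j * (inner ℝ (w j) u : ℝ))
        = (inner ℝ (w i) u : ℝ) := by
      rw [Finset.sum_eq_single i]
      · simp
      · intro j _ hj; simp [Pi.single_apply, hj]
      · simp
    rw [hsum] at h1
    have hκ : κ s = 0 := by
      have : κ s * (inner ℝ (w i) u : ℝ) = 0 := by linarith [h0, h1, mul_add (κ s) (inner ℝ (w i) u : ℝ) (inner ℝ (γ s) u : ℝ)]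
      exact (mul_eq_zero.mp this).resolve_right hi
    refine ⟨hκ, ?_⟩
    rw [hκ, zero_mul] at h0
    exact ((mul_eq_zero.mp h0.symm).resolve_left hα)
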